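/- Matrix bounded differences for independent variables (variance bound form): let Z = (Z₁,...,Zₙ) be independent random variables, H a measurable function into d×d Hermitian matrices, and A₁,...,Aₙ deterministic Hermitian matrices with (H(z) − H(z₁,...,zⱼ',...,zₙ))² ≼ Aⱼ² for all admissible values. Then the conditional variance V_X = (1/2)E[(X−X')² | Z] of the exchangeable pair X = H(Z) − EH(Z), X' = H(Z') − EH(Z) (Z' obtained by replacing a uniformly random coordinate of Z by an independent copy) satisfies V_X ≼ (1/(2n)) Σⱼ Aⱼ² almost surely. -/

import Mathlib

open MeasureTheory ProbabilityTheory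

open scoped ComplexOrder

attribute [local instance] Matrix.normedAddCommGroup Matrix.normedSpace

noncomputable local instance (d : ℕ) : MeasurableSpace (Matrix (Fin d) (Fin d) ℂ) := borel _
local instance (d : ℕ) : BorelSpace (Matrix (Fin d) (Fin d) ℂ) := ⟨rfl⟩

open scoped Matrix

noncomputable local instance MBD.instCENorm (d : ℕ) : ContinuousENorm (Matrix (Fin d) (Fin d) ℂ) :=
  SeminormedAddGroup.toContinuousENorm
local instance MBD.instPMS (d : ℕ) :
    TopologicalSpace.PseudoMetrizableSpace (Matrix (Fin d) (Fin d) ℂ) :=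
  inferInstanceAs (TopologicalSpace.PseudoMetrizableSpace (Fin d → Fin d → ℂ))
local instance MBD.instSCT (d : ℕ) : SecondCountableTopology (Matrix (Fin d) (Fin d) ℂ) :=
  inferInstanceAs (SecondCountableTopology (Fin d → Fin d → ℂ))

section Aux

lemma MBD.mspace_eq {d : ℕ} : (inferInstance : MeasurableSpace (Matrix (Fin d) (Fin d) ℂ)) =
    (MeasurableSpace.pi : MeasurableSpace (Fin d → Fin d → ℂ)) :=
  ((Pi.borelSpace (X := fun _ : Fin d => Fin d → ℂ)).measurable_eq).symm

lemma MBD.measurable_matrix_of_entries {d : ℕ} {Ω : Type*} [MeasurableSpace Ω]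
    {f : Ω → Matrix (Fin d) (Fin d) ℂ} (h : ∀ i j, Measurable fun a => f a i j) :
    Measurable f := by
  have h2 : @Measurable Ω (Fin d → Fin d → ℂ) _ MeasurableSpace.pi f :=
    measurable_pi_iff.mpr fun i => measurable_pi_iff.mpr fun j => h i j
  exact cast (congrArg (fun m : MeasurableSpace (Matrix (Fin d) (Fin d) ℂ) =>
    @Measurable Ω _ inferInstance m f) MBD.mspace_eq).symm h2

lemma MBD.measurable_entry {d : ℕ} (i j : Fin d) :
    Measurable fun M : Matrix (Fin d) (Fin d) ℂ => M i j := by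
  have h2 : @Measurable (Fin d → Fin d → ℂ) ℂ MeasurableSpace.pi _ (fun M => M i j) :=
    (measurable_pi_apply j).comp (measurable_pi_apply i)
  exact cast (congrArg (fun m : MeasurableSpace (Matrix (Fin d) (Fin d) ℂ) =>
    @Measurable _ ℂ m inferInstance (fun M => M i j)) MBD.mspace_eq).symm h2

theorem MBD.condexp_clm {Ω : Type*} {m m0 : MeasurableSpace Ω} {μ : Measure Ω}
    {E F : Type*} [NormedAddCommGroup E] [NormedSpace ℝ E] [CompleteSpace E]
    [NormedAddCommGroup F] [NormedSpace ℝ F] [CompleteSpace F]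
    (hm : m ≤ m0) [SigmaFinite (μ.trim hm)] (T : E →L[ℝ] F) {f : Ω → E}
    (hf : Integrable f μ) :
    (fun ω => T (condExp m μ f ω)) =ᵐ[μ] condExp m μ (fun ω => T (f ω)) := by
  refine ae_eq_condExp_of_forall_setIntegral_eq hm (T.integrable_comp hf) ?_ ?_ ?_
  · intro s _ _
    exact (T.integrable_comp integrable_condExp).integrableOn
  · intro s hs _
    rw [T.integral_comp_comm integrable_condExp.integrableOn,
      T.integral_comp_comm hf.integrableOn, setIntegral_condExp hm hf hs]
  · exact (T.continuous.comp_stronglyMeasurable stronglyMeasurable_condExp).aestronglyMeasurable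

noncomputable def MBD.quadLM {d : ℕ} (x : Fin d → ℂ) : Matrix (Fin d) (Fin d) ℂ →ₗ[ℂ] ℂ where
  toFun M := star x ⬝ᵥ M *ᵥ x
  map_add' M N := by simp [Matrix.add_mulVec, dotProduct_add]
  map_smul' c M := by
    show star x ⬝ᵥ (c • M) *ᵥ x = (RingHom.id ℂ) c • (star x ⬝ᵥ M *ᵥ x)
    rw [Matrix.smul_mulVec, dotProduct_smul, RingHom.id_apply]

noncomputable def MBD.quadCLM {d : ℕ} (x : Fin d → ℂ) :
    Matrix (Fin d) (Fin d) ℂ →L[ℝ] ℂ :=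
  LinearMap.toContinuousLinearMap ((MBD.quadLM x).restrictScalars ℝ)

@[simp] lemma MBD.quadCLM_apply {d : ℕ} (x : Fin d → ℂ) (M : Matrix (Fin d) (Fin d) ℂ) :
    MBD.quadCLM x M = star x ⬝ᵥ M *ᵥ x := rfl

noncomputable def MBD.ctLM {d : ℕ} :
    Matrix (Fin d) (Fin d) ℂ →ₗ[ℝ] Matrix (Fin d) (Fin d) ℂ where
  toFun M := Mᴴ
  map_add' M N := Matrix.conjTranspose_add M N
  map_smul' c M := by
    show (c • M)ᴴ = c • Mᴴ
    ext i j
    simp [Matrix.conjTranspose_apply, Matrix.smul_apply, star_smul]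

noncomputable def MBD.ctCLM {d : ℕ} :
    Matrix (Fin d) (Fin d) ℂ →L[ℝ] Matrix (Fin d) (Fin d) ℂ :=
  LinearMap.toContinuousLinearMap MBD.ctLM

@[simp] lemma MBD.ctCLM_apply {d : ℕ} (M : Matrix (Fin d) (Fin d) ℂ) :
    MBD.ctCLM M = Mᴴ := rfl

theorem MBD.condexp_psd {d : ℕ} {Ω : Type*} {m m0 : MeasurableSpace Ω} {μ : Measure Ω}
    (hm : m ≤ m0) [IsFiniteMeasure μ] [SigmaFinite (μ.trim hm)]
    {f : Ω → Matrix (Fin d) (Fin d) ℂ} (hf : Integrable f μ)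
    (hpsd : ∀ ω, (f ω).PosSemidef) :
    ∀ᵐ ω ∂μ, (condExp m μ f ω).PosSemidef := by
  have hHerm : ∀ᵐ ω ∂μ, (condExp m μ f ω)ᴴ = condExp m μ f ω := by
    have h1 := MBD.condexp_clm hm MBD.ctCLM hf
    have h2 : (fun ω => MBD.ctCLM (f ω)) = f := funext fun ω => (hpsd ω).1
    erw [h2] at h1
    filter_upwards [h1] with ω hω
    exact hω
  have hq : ∀ x : Fin d → ℂ, ∀ᵐ ω ∂μ, 0 ≤ star x ⬝ᵥ (condExp m μ f ω) *ᵥ x := by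
    intro x
    have hre := MBD.condexp_clm hm (Complex.reCLM.comp (MBD.quadCLM x)) hf
    have him := MBD.condexp_clm hm (Complex.imCLM.comp (MBD.quadCLM x)) hf
    have hre0 : 0 ≤ᵐ[μ] condExp m μ (fun ω => (Complex.reCLM.comp (MBD.quadCLM x)) (f ω)) :=
      condExp_nonneg (Filter.Eventually.of_forall fun ω => by
        simpa using (Complex.nonneg_iff.mp ((hpsd ω).dotProduct_mulVec_nonneg x)).1)
    have him0 : condExp m μ (fun ω => (Complex.imCLM.comp (MBD.quadCLM x)) (f ω)) =ᵐ[μ]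
        fun _ => (0:ℝ) := by
      have h3 : (fun ω => (Complex.imCLM.comp (MBD.quadCLM x)) (f ω)) = fun _ => (0:ℝ) :=
        funext fun ω => by
          simpa using ((Complex.nonneg_iff.mp ((hpsd ω).dotProduct_mulVec_nonneg x)).2).symm
      rw [h3, condExp_const hm]
    filter_upwards [hre, him, hre0, him0] with ω h1 h2 h3 h4
    erw [← h1] at h3
    erw [h4] at h2
    rw [Complex.nonneg_iff]
    exact ⟨h3, h2.symm⟩
  obtain ⟨s, hsc, hsd⟩ := TopologicalSpace.exists_countable_dense (Fin d → ℂ)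
  have hball : ∀ᵐ ω ∂μ, ∀ x ∈ s, 0 ≤ star x ⬝ᵥ (condExp m μ f ω) *ᵥ x :=
    (MeasureTheory.ae_ball_iff hsc).mpr fun x _ => hq x
  filter_upwards [hball, hHerm] with ω h1 h2
  refine Matrix.PosSemidef.of_dotProduct_mulVec_nonneg h2 fun x => ?_
  have hqc : Continuous fun y : Fin d → ℂ => star y ⬝ᵥ (condExp m μ f ω) *ᵥ y := by
    simp only [dotProduct, Matrix.mulVec, Pi.star_apply]
    fun_prop
  have hzc : IsClosed {z : ℂ | 0 ≤ z} := by
    have hset : {z : ℂ | 0 ≤ z} = Complex.re ⁻¹' Set.Ici 0 ∩ Complex.im ⁻¹' {0} := by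
      ext z
      simp [Complex.nonneg_iff, eq_comm]
    rw [hset]
    exact (isClosed_Ici.preimage Complex.continuous_re).inter
      (isClosed_singleton.preimage Complex.continuous_im)
  have hcl : IsClosed {y : Fin d → ℂ | 0 ≤ star y ⬝ᵥ (condExp m μ f ω) *ᵥ y} :=
    hzc.preimage hqc
  have hsub : s ⊆ {y : Fin d → ℂ | 0 ≤ star y ⬝ᵥ (condExp m μ f ω) *ᵥ y} :=
    fun y hy => h1 y hy
  have hcls : closure s ⊆ {y : Fin d → ℂ | 0 ≤ star y ⬝ᵥ (condExp m μ f ω) *ᵥ y} :=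
    hcl.closure_subset_iff.mpr hsub
  rw [hsd.closure_eq] at hcls
  exact hcls (Set.mem_univ x)

lemma MBD.psd_diag {d : ℕ} {P : Matrix (Fin d) (Fin d) ℂ} (h : P.PosSemidef) (k : Fin d) :
    0 ≤ P k k := by
  have h2 := h.dotProduct_mulVec_nonneg (Pi.single k 1)
  have h3 : star (Pi.single k 1 : Fin d → ℂ) ⬝ᵥ P *ᵥ (Pi.single k 1) = P k k := by
    simp [dotProduct, Matrix.mulVec_single, Pi.star_apply, Pi.single_apply,
      apply_ite, Finset.sum_ite_eq]
  rwa [h3] at h2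

lemma MBD.smul_psd {d : ℕ} {P : Matrix (Fin d) (Fin d) ℂ} (h : P.PosSemidef) {r : ℝ}
    (hr : 0 ≤ r) : (r • P).PosSemidef := by
  refine Matrix.PosSemidef.of_dotProduct_mulVec_nonneg ?_ ?_
  · show (r • P)ᴴ = r • P
    have h1 : Pᴴ = P := h.1
    ext i j
    have := congrFun (congrFun h1 i) j
    simp only [Matrix.conjTranspose_apply] at this ⊢
    simp only [Matrix.smul_apply, star_smul, star_trivial, this]
  · intro x
    have h2 := h.dotProduct_mulVec_nonneg x
    have : star x ⬝ᵥ (r • P) *ᵥ x = (r : ℂ) * (star x ⬝ᵥ P *ᵥ x) := by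
      rw [Matrix.smul_mulVec, dotProduct_smul]
      simp [Complex.real_smul]
    rw [this]
    exact mul_nonneg (by exact_mod_cast Complex.zero_le_real.mpr hr) h2


lemma MBD.indepFun_apply_pi {Ω ι ι' : Type*} [MeasurableSpace Ω] {μ : Measure Ω}
    [DecidableEq ι] {β : ι → Type*} (m : ∀ i, MeasurableSpace (β i)) {f : ∀ i, Ω → β i}
    (hindep : iIndepFun (m := m) f μ) (hf : ∀ i, Measurable (f i))
    (i0 : ι) [Fintype ι'] (e : ι' → ι) (he : ∀ j, e j ≠ i0) :
    IndepFun (f i0) (fun ω (j : ι') => f (e j) ω) μ := by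
  letI := m
  classical
  have hdisj : Disjoint ({i0} : Finset ι) (Finset.univ.image e) := by
    rw [Finset.disjoint_left]
    intro a ha hb
    rw [Finset.mem_singleton] at ha
    subst ha
    rw [Finset.mem_image] at hb
    obtain ⟨j, -, hj⟩ := hb
    exact he j hj
  have hIF := hindep.indepFun_finset {i0} (Finset.univ.image e) hdisj hf
  have h2 := hIF.comp
    (φ := fun g : ∀ i : ({i0} : Finset ι), β i => g ⟨i0, by simp⟩)
    (ψ := fun (g : ∀ i : (Finset.univ.image e : Finset ι), β i) (j : ι') =>
      g ⟨e j, Finset.mem_image_of_mem e (Finset.mem_univ j)⟩)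
    (measurable_pi_apply (X := fun i : ({i0} : Finset ι) => β i) _) (measurable_pi_iff.mpr fun j => measurable_pi_apply _)
  exact h2

end Aux
set_option maxHeartbeats 2000000 in
theorem matrix_bounded_differences_conditional_variance {d n : ℕ} {Ω : Type*} {𝓩 : Type}
    [MeasurableSpace Ω] (μ : Measure Ω) [IsProbabilityMeasure μ]
    [TopologicalSpace 𝓩] [PolishSpace 𝓩] [MeasurableSpace 𝓩] [BorelSpace 𝓩]
    (Z Zt : Ω → Fin n → 𝓩) (J : Ω → Fin n)
    (hZmeas : Measurable Z) (hZtmeas : Measurable Zt) (hJmeas : Measurable J)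
    (hindep : iIndepFun
      (β := fun i : (Fin n ⊕ Fin n) ⊕ Unit => match i with
        | .inl _ => 𝓩
        | .inr _ => Fin n)
      (m := fun i => match i with
        | .inl _ => inferInstance
        | .inr _ => inferInstance)
      (fun i => match i with
        | .inl (.inl j) => fun ω => Z ω j
        | .inl (.inr j) => fun ω => Zt ω j
        | .inr _ => J) μ)
    (hcopy : ∀ j, IdentDistrib (fun ω => Zt ω j) (fun ω => Z ω j) μ μ)
    (hunif : ∀ j, μ (J ⁻¹' {j}) = (n : ENNReal)⁻¹)
    (H : (Fin n → 𝓩) → Matrix (Fin d) (Fin d) ℂ) (hHmeas : Measurable H)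
    (hherm : ∀ z, (H z).IsHermitian)
    (A : Fin n → Matrix (Fin d) (Fin d) ℂ)
    (hbd : ∀ (z : Fin n → 𝓩) (j : Fin n) (z' : 𝓩),
      ((A j) ^ 2 - (H z - H (Function.update z j z')) ^ 2).PosSemidef) :
    ∀ᵐ ω ∂μ,
      (((1 : ℝ) / (2 * n)) • ∑ j, (A j) ^ 2 -
        (MeasureTheory.condExp (MeasurableSpace.comap Z inferInstance) μ
          (fun ω => ((1 : ℝ) / 2) •
            ((H (Z ω) - (∫ ω', H (Z ω') ∂μ)) -
              (H (Function.update (Z ω) (J ω) (Zt ω (J ω))) - (∫ ω', H (Z ω') ∂μ))) ^ 2))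
          ω).PosSemidef := by
  classical
  have hΩ : Nonempty Ω := by
    by_contra h
    rw [not_nonempty_iff] at h
    have h1 : μ Set.univ = 1 := measure_univ
    rw [Set.univ_eq_empty_iff.mpr h, measure_empty] at h1
    exact zero_ne_one h1
  obtain ⟨ω₀⟩ := hΩ
  have hn : 0 < n := (J ω₀).pos
  have hm : MeasurableSpace.comap Z MeasurableSpace.pi ≤ ‹MeasurableSpace Ω› :=
    hZmeas.comap_le
  haveI : SigmaFinite (μ.trim hm) := inferInstance
  set Z' : Ω → Fin n → 𝓩 := fun ω => Function.update (Z ω) (J ω) (Zt ω (J ω)) with hZ'def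
  set D : Ω → Matrix (Fin d) (Fin d) ℂ := fun ω => H (Z ω) - H (Z' ω) with hDdef
  set F : Ω → Matrix (Fin d) (Fin d) ℂ := fun ω => ((1:ℝ)/2) • (D ω) ^ 2 with hFdef
  set G : Ω → Matrix (Fin d) (Fin d) ℂ := fun ω => ((1:ℝ)/2) • (A (J ω)) ^ 2 with hGdef
  have hinteq : (fun ω => ((1 : ℝ) / 2) •
      ((H (Z ω) - (∫ ω', H (Z ω') ∂μ)) -
        (H (Function.update (Z ω) (J ω) (Zt ω (J ω))) - (∫ ω', H (Z ω') ∂μ))) ^ 2) = F :=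
    funext fun ω => by rw [sub_sub_sub_cancel_right]
  rw [hinteq]
  -- measurability
  have hZ'meas : Measurable Z' := by
    refine measurable_pi_iff.mpr fun k => ?_
    have hk : (fun ω => Z' ω k) = fun ω => if k = J ω then Zt ω k else Z ω k := by
      funext ω
      simp only [hZ'def, Function.update_apply]
      by_cases h : k = J ω
      · rw [if_pos h, if_pos h, h]
      · rw [if_neg h, if_neg h]
    rw [hk]
    have hset : MeasurableSet {ω | k = J ω} := by
      have : {ω | k = J ω} = J ⁻¹' {k} := by ext ω; simp [eq_comm]
      rw [this]; exact hJmeas (measurableSet_singleton k)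
    exact Measurable.ite hset ((measurable_pi_apply k).comp hZtmeas)
      ((measurable_pi_apply k).comp hZmeas)
  have hDmeas : Measurable D := by
    refine MBD.measurable_matrix_of_entries fun i j => ?_
    exact ((MBD.measurable_entry i j).comp (hHmeas.comp hZmeas)).sub
      ((MBD.measurable_entry i j).comp (hHmeas.comp hZ'meas))
  have hFmeas : Measurable F := by
    refine MBD.measurable_matrix_of_entries fun i j => ?_
    have : (fun ω => F ω i j) =
        fun ω => ((1:ℝ)/2) • ∑ k, (D ω) i k * (D ω) k j := by
      funext ω
      simp [hFdef, pow_two, Matrix.mul_apply, Matrix.smul_apply]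
    rw [this]
    exact Measurable.const_smul (Finset.measurable_sum _ fun k _ =>
      (((MBD.measurable_entry i k).comp hDmeas).mul
        ((MBD.measurable_entry k j).comp hDmeas))) ((1:ℝ)/2)
  -- pointwise facts
  have hDherm : ∀ ω, (D ω).IsHermitian := fun ω => (hherm _).sub (hherm _)
  have hPSD : ∀ ω, ((A (J ω)) ^ 2 - (D ω) ^ 2).PosSemidef := fun ω =>
    hbd (Z ω) (J ω) (Zt ω (J ω))
  -- uniform bound
  set C : ℝ := ∑ j : Fin n, ∑ k : Fin d, ‖(A j ^ 2) k k‖ with hCdef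
  have hC0 : 0 ≤ C := Finset.sum_nonneg fun j _ => Finset.sum_nonneg fun k _ => norm_nonneg _
  have hdiag : ∀ ω (k : Fin d), (((D ω) ^ 2) k k).re ≤ C := by
    intro ω k
    have h1 := MBD.psd_diag (hPSD ω) k
    have h2 := (Complex.nonneg_iff.mp h1).1
    have h3 : (((D ω) ^ 2) k k).re ≤ ((A (J ω) ^ 2) k k).re := by
      simp only [Matrix.sub_apply, Complex.sub_re] at h2
      linarith
    refine h3.trans ((Complex.re_le_norm _).trans ?_)
    calc ‖(A (J ω) ^ 2) k k‖ ≤ ∑ k' : Fin d, ‖(A (J ω) ^ 2) k' k'‖ :=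
          Finset.single_le_sum (f := fun k' => ‖(A (J ω) ^ 2) k' k'‖)
            (fun k' _ => norm_nonneg _) (Finset.mem_univ k)
      _ ≤ C := Finset.single_le_sum
          (f := fun j => ∑ k' : Fin d, ‖(A j ^ 2) k' k'‖)
          (fun j _ => Finset.sum_nonneg fun k' _ => norm_nonneg _) (Finset.mem_univ (J ω))
  have hentry : ∀ ω (i k : Fin d), ‖(D ω) i k‖ ^ 2 ≤ C := by
    intro ω i k
    have hsum : (((D ω) ^ 2) k k).re = ∑ m, ‖(D ω) m k‖ ^ 2 := by
      rw [pow_two, Matrix.mul_apply, Complex.re_sum]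
      refine Finset.sum_congr rfl fun m _ => ?_
      have hmk : (D ω) k m = star ((D ω) m k) := ((hDherm ω).apply k m).symm
      rw [hmk]
      have hns : star ((D ω) m k) * (D ω) m k = (Complex.normSq ((D ω) m k) : ℂ) :=
        (Complex.normSq_eq_conj_mul_self).symm
      rw [hns, Complex.ofReal_re, Complex.sq_norm]
    have h4 : ‖(D ω) i k‖ ^ 2 ≤ ∑ m, ‖(D ω) m k‖ ^ 2 :=
      Finset.single_le_sum (f := fun m => ‖(D ω) m k‖ ^ 2)
        (fun m _ => sq_nonneg _) (Finset.mem_univ i)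
    calc ‖(D ω) i k‖ ^ 2 ≤ (((D ω) ^ 2) k k).re := by rw [hsum]; exact h4
      _ ≤ C := hdiag ω k
  have hFbd : ∀ ω, ‖F ω‖ ≤ ((1:ℝ)/2) * (d * C) := by
    intro ω
    have hD2 : ‖(D ω) ^ 2‖ ≤ d * C := by
      refine (Matrix.norm_le_iff (by positivity)).mpr fun i j => ?_
      rw [pow_two, Matrix.mul_apply]
      calc ‖∑ k, (D ω) i k * (D ω) k j‖ ≤ ∑ k, ‖(D ω) i k * (D ω) k j‖ :=
            norm_sum_le _ _
        _ ≤ ∑ _k : Fin d, C := by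
            refine Finset.sum_le_sum fun k _ => ?_
            rw [norm_mul]
            have h1 : ‖(D ω) i k‖ ≤ Real.sqrt C :=
              (Real.le_sqrt (norm_nonneg _) hC0).mpr (hentry ω i k)
            have h2 : ‖(D ω) k j‖ ≤ Real.sqrt C :=
              (Real.le_sqrt (norm_nonneg _) hC0).mpr (hentry ω k j)
            calc ‖(D ω) i k‖ * ‖(D ω) k j‖ ≤ Real.sqrt C * Real.sqrt C :=
                  mul_le_mul h1 h2 (norm_nonneg _) (Real.sqrt_nonneg _)
              _ = C := Real.mul_self_sqrt hC0
        _ = d * C := by simp [mul_comm]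
    calc ‖F ω‖ = ‖((1:ℝ)/2)‖ * ‖(D ω) ^ 2‖ := norm_smul _ _
      _ ≤ ((1:ℝ)/2) * (d * C) := by
          rw [Real.norm_eq_abs, abs_of_nonneg (by norm_num : (0:ℝ) ≤ 1/2)]
          exact mul_le_mul_of_nonneg_left hD2 (by norm_num)
  have hFint : Integrable F μ :=
    Integrable.mono' (integrable_const (((1:ℝ)/2) * (d * C)))
      hFmeas.aestronglyMeasurable (Filter.Eventually.of_forall hFbd)
  -- G
  have hGmeas : Measurable G :=
    (measurable_from_top (f := fun j : Fin n => ((1:ℝ)/2) • (A j) ^ 2)).comp hJmeas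
  have hGint : Integrable G μ := by
    refine Integrable.mono' (integrable_const (∑ j : Fin n, ‖((1:ℝ)/2) • (A j) ^ 2‖))
      hGmeas.aestronglyMeasurable (Filter.Eventually.of_forall fun ω => ?_)
    exact Finset.single_le_sum (f := fun j => ‖((1:ℝ)/2) • (A j) ^ 2‖)
      (fun j _ => norm_nonneg _) (Finset.mem_univ (J ω))
  have hGFpsd : ∀ ω, ((G - F) ω).PosSemidef := by
    intro ω
    have heq : (G - F) ω = ((1:ℝ)/2) • ((A (J ω)) ^ 2 - (D ω) ^ 2) := by
      simp only [Pi.sub_apply, hGdef, hFdef, smul_sub]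
    rw [heq]
    exact MBD.smul_psd (hPSD ω) (by norm_num)
  -- conditional expectations
  have hcondGF := MBD.condexp_psd hm (hGint.sub hFint) hGFpsd
  have hsub := condExp_sub (m := MeasurableSpace.comap Z MeasurableSpace.pi) (μ := μ) hGint hFint
  -- independence of J and Z
  have hJZ : IndepFun J Z μ := by
    have h2 := MBD.indepFun_apply_pi _ hindep
      (by
        rintro ((j | j) | u)
        · exact (measurable_pi_apply j).comp hZmeas
        · exact (measurable_pi_apply j).comp hZtmeas
        · exact hJmeas)
      (Sum.inr ()) (fun j : Fin n => Sum.inl (Sum.inl j)) (by simp)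
    exact h2
  have hIndep : ProbabilityTheory.Indep (MeasurableSpace.comap J inferInstance)
      (MeasurableSpace.comap Z MeasurableSpace.pi) μ := hJZ
  have hSMG : StronglyMeasurable[MeasurableSpace.comap J inferInstance] G := by
    have hJ' : Measurable[MeasurableSpace.comap J inferInstance] J :=
      measurable_iff_comap_le.mpr le_rfl
    exact ((measurable_from_top (f := fun j : Fin n => ((1:ℝ)/2) • (A j) ^ 2)).comp
      hJ').stronglyMeasurable
  have hGconst := condExp_indep_eq hJmeas.comap_le hm hSMG hIndep
  -- integral of G
  have hGint_eq : (∫ ω, G ω ∂μ) = ((1 : ℝ) / (2 * n)) • ∑ j, (A j) ^ 2 := by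
    have hrepr : G = fun ω => ∑ j : Fin n,
        Set.indicator (J ⁻¹' {j}) (fun _ => ((1:ℝ)/2) • (A j) ^ 2) ω := by
      funext ω
      rw [Finset.sum_eq_single (J ω)]
      · simp [hGdef, Set.indicator_apply]
      · intro j _ hj
        simp [Set.indicator_apply, Ne.symm hj]
      · intro h
        exact absurd (Finset.mem_univ _) h
    rw [hrepr, integral_finset_sum]
    · have hterm : ∀ j : Fin n,
          (∫ ω, Set.indicator (J ⁻¹' {j}) (fun _ => ((1:ℝ)/2) • (A j) ^ 2) ω ∂μ) =
            ((n : ℝ))⁻¹ • (((1:ℝ)/2) • (A j) ^ 2) := by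
        intro j
        rw [integral_indicator_const _ (hJmeas (measurableSet_singleton j)), measureReal_def, hunif j]
        congr 1
        rw [ENNReal.toReal_inv]
        simp
      simp_rw [hterm]
      calc ∑ j : Fin n, ((n:ℝ))⁻¹ • (((1:ℝ)/2) • (A j) ^ 2)
          = ∑ j : Fin n, ((1:ℝ)/(2*n)) • (A j) ^ 2 := by
            refine Finset.sum_congr rfl fun j _ => ?_
            rw [smul_smul]
            congr 1
            rw [one_div, one_div, mul_inv_rev]
        _ = ((1:ℝ)/(2*n)) • ∑ j, (A j) ^ 2 := (Finset.smul_sum).symm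
    · intro j _
      exact (integrable_const _).indicator (hJmeas (measurableSet_singleton j))
  -- assemble
  filter_upwards [hcondGF, hsub, hGconst] with ω h1 h2 h3
  rw [h2, Pi.sub_apply, h3] at h1
  rw [← hGint_eq]
  exact h1
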